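/- For every s > 0 the integral ∫_{0}^{∞} (Φ'(z))² / ( Φ(z+s) - Φ(z) ) dz is finite. -/

import Mathlib

open MeasureTheory Real Set Filter

/-- The standard normal density `Φ'(z) = (1/√(2π)) e^{-z²/2}`. -/
noncomputable def Φ' (z : ℝ) : ℝ := (Real.sqrt (2 * Real.pi))⁻¹ * Real.exp (-z ^ 2 / 2)

/-- The standard normal cumulative distribution function `Φ`. -/
noncomputable def Φ (z : ℝ) : ℝ := ∫ u in Set.Iic z, Φ' u

lemma Φ'_pos (z : ℝ) : 0 < Φ' z := by
  have : 0 < Real.sqrt (2 * Real.pi) := Real.sqrt_pos.2 (by positivity)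
  exact mul_pos (inv_pos.2 this) (Real.exp_pos _)

lemma Φ'_integrable : Integrable Φ' := by
  have h : Integrable (fun x : ℝ => Real.exp (-(1/2 : ℝ) * x ^ 2)) :=
    integrable_exp_neg_mul_sq (by norm_num)
  have := h.const_mul (Real.sqrt (2 * Real.pi))⁻¹
  refine this.congr (Filter.EventuallyEq.of_eq ?_)
  funext x
  simp only [Φ']
  congr 1
  ring

lemma Φ'_continuous : Continuous Φ' := by
  unfold Φ'
  continuity

lemma Φ_monotone : Monotone Φ := by
  intro a b hab
  exact setIntegral_mono_set Φ'_integrable.integrableOn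
    (Filter.Eventually.of_forall fun z => (Φ'_pos z).le)
    (HasSubset.Subset.eventuallyLE (Iic_subset_Iic.2 hab))

lemma Φ_diff (z s : ℝ) (hs : 0 ≤ s) : Φ (z + s) - Φ z = ∫ u in Set.Ioc z (z + s), Φ' u := by
  rw [Φ, Φ, intervalIntegral.integral_Iic_sub_Iic Φ'_integrable.integrableOn
    Φ'_integrable.integrableOn, intervalIntegral.integral_of_le (by linarith)]

/-- `∫_0^∞ (Φ'(z))² / (Φ(z+s) - Φ(z)) dz` is finite for every `s > 0`. -/
theorem integrable_first_term (s : ℝ) (hs : 0 < s) :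
    IntegrableOn (fun z : ℝ => (Φ' z) ^ 2 / (Φ (z + s) - Φ z)) (Set.Ioi 0) volume := by
  -- dominating function
  set c : ℝ := (Real.sqrt (2 * Real.pi))⁻¹ with hc
  have hcpos : 0 < c := inv_pos.2 (Real.sqrt_pos.2 (by positivity))
  have hgint : Integrable (fun z : ℝ => (c / s * Real.exp (s ^ 2)) *
      Real.exp (-(1/2 : ℝ) * (z - s) ^ 2)) := by
    have h : Integrable (fun x : ℝ => Real.exp (-(1/2 : ℝ) * x ^ 2)) :=
      integrable_exp_neg_mul_sq (by norm_num)
    exact (h.comp_sub_right s).const_mul _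
  -- lower bound on the denominator
  have hden : ∀ z : ℝ, 0 < z → s * Φ' (z + s) ≤ Φ (z + s) - Φ z := by
    intro z hz
    rw [Φ_diff z s hs.le]
    have hle : ∀ u ∈ Set.Ioc z (z + s), Φ' (z + s) ≤ Φ' u := by
      intro u hu
      have h1 : 0 < u := lt_of_lt_of_le hz hu.1.le
      have h2 : u ≤ z + s := hu.2
      unfold Φ'
      refine mul_le_mul_of_nonneg_left (Real.exp_le_exp.2 ?_) hcpos.le
      nlinarith
    calc s * Φ' (z + s) = ∫ _ in Set.Ioc z (z + s), Φ' (z + s) := by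
          rw [setIntegral_const]
          simp only [Real.volume_Ioc, add_sub_cancel_left, smul_eq_mul]
          rw [measureReal_def, Real.volume_Ioc, add_sub_cancel_left, ENNReal.toReal_ofReal hs.le]
      _ ≤ ∫ u in Set.Ioc z (z + s), Φ' u := by
          apply setIntegral_mono_on
          · exact integrableOn_const (by rw [Real.volume_Ioc]; exact ENNReal.ofReal_ne_top)
          · exact Φ'_integrable.integrableOn
          · exact measurableSet_Ioc
          · exact hle
  have hdenpos : ∀ z : ℝ, 0 < z → 0 < Φ (z + s) - Φ z := fun z hz =>
    lt_of_lt_of_le (mul_pos hs (Φ'_pos _)) (hden z hz)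
  -- measurability
  have hΦmeas : Measurable Φ := Φ_monotone.measurable
  have hmeas : AEStronglyMeasurable (fun z : ℝ => (Φ' z) ^ 2 / (Φ (z + s) - Φ z))
      (volume.restrict (Set.Ioi 0)) := by
    apply Measurable.aestronglyMeasurable
    exact ((Φ'_continuous.measurable.pow_const 2).div
      ((hΦmeas.comp (measurable_id.add_const s)).sub hΦmeas))
  refine Integrable.mono' hgint.integrableOn hmeas ?_
  filter_upwards [ae_restrict_mem measurableSet_Ioi] with z hz
  have hz : (0:ℝ) < z := hz
  have hnn : 0 ≤ (Φ' z) ^ 2 / (Φ (z + s) - Φ z) :=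
    div_nonneg (sq_nonneg _) (hdenpos z hz).le
  rw [Real.norm_of_nonneg hnn]
  have h1 : (Φ' z) ^ 2 / (Φ (z + s) - Φ z) ≤ (Φ' z) ^ 2 / (s * Φ' (z + s)) := by
    have hd := hden z hz
    gcongr
    exact mul_pos hs (Φ'_pos _)
  have e1 : Real.exp (-z ^ 2 / 2) ^ 2 = Real.exp (-z ^ 2) := by
    rw [sq, ← Real.exp_add]
    congr 1; ring
  have e2 : Real.exp (s ^ 2) * Real.exp (-(1/2 : ℝ) * (z - s) ^ 2)
      = Real.exp (-z ^ 2) / Real.exp (-(z + s) ^ 2 / 2) := by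
    rw [← Real.exp_add, eq_div_iff (Real.exp_ne_zero _), ← Real.exp_add]
    congr 1; ring
  have key : (Φ' z) ^ 2 / (s * Φ' (z + s))
      = c / s * Real.exp (s ^ 2) * Real.exp (-(1/2 : ℝ) * (z - s) ^ 2) := by
    simp only [Φ', ← hc]
    rw [mul_pow, e1, mul_assoc, e2]
    field_simp
  rw [key] at h1
  exact h1
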